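/- Let A be a d×d symmetric positive semidefinite matrix with eigenvalues s_1 ≥ ... ≥ s_d ≥ 0, and let t, τ, c > 0. Then tr((t²A + cI)^{-2}(t⁴A + cτ²I)) = Σ_{j=1}^d (t⁴s_j + cτ²)/(t²s_j + c)², and this is minimized over t ∈ [0, ∞) at t = τ, with minimal value Σ_{j=1}^d τ²/(τ²s_j + c) = tr((A + (c/τ²)I)^{-1}). -/

import Mathlib

open Matrix

section Aux

variable {n : Type*} [Fintype n] [DecidableEq n]

lemma conj_mul_aux (U M N : Matrix n n ℝ) (hU' : star U * U = 1) :
    (U * M * star U) * (U * N * star U) = U * (M * N) * star U := by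
  calc (U * M * star U) * (U * N * star U)
      = U * M * (star U * U) * N * star U := by noncomm_ring
    _ = U * (M * N) * star U := by rw [hU']; noncomm_ring

lemma conj_trace_aux (U D : Matrix n n ℝ) (hU' : star U * U = 1) :
    (U * D * star U).trace = D.trace := by
  rw [trace_mul_cycle]
  rw [hU', one_mul]

lemma conj_inv_aux (U : Matrix n n ℝ) (v : n → ℝ) (hv : ∀ j, v j ≠ 0)
    (hU : U * star U = 1) (hU' : star U * U = 1) :
    (U * diagonal v * star U)⁻¹ = U * diagonal (fun j => (v j)⁻¹) * star U := by
  apply inv_eq_right_inv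
  rw [conj_mul_aux _ _ _ hU', diagonal_mul_diagonal]
  have : (fun j => v j * (v j)⁻¹) = fun _ => (1 : ℝ) := by
    funext j; exact mul_inv_cancel₀ (hv j)
  rw [this, diagonal_one, mul_one, hU]

end Aux

theorem stmt_9 (d : ℕ) (A : Matrix (Fin d) (Fin d) ℝ) (hA : A.PosSemidef)
    (τ c : ℝ) (hτ : 0 < τ) (hc : 0 < c) :
    (∀ t : ℝ, 0 ≤ t →
      ((t ^ 2 • A + c • (1 : Matrix (Fin d) (Fin d) ℝ))⁻¹ ^ 2 *
          (t ^ 4 • A + (c * τ ^ 2) • (1 : Matrix (Fin d) (Fin d) ℝ))).trace =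
        ∑ j, (t ^ 4 * hA.isHermitian.eigenvalues j + c * τ ^ 2) /
          (t ^ 2 * hA.isHermitian.eigenvalues j + c) ^ 2) ∧
    (∀ t : ℝ, 0 ≤ t →
      ((τ ^ 2 • A + c • (1 : Matrix (Fin d) (Fin d) ℝ))⁻¹ ^ 2 *
          (τ ^ 4 • A + (c * τ ^ 2) • (1 : Matrix (Fin d) (Fin d) ℝ))).trace ≤
        ((t ^ 2 • A + c • (1 : Matrix (Fin d) (Fin d) ℝ))⁻¹ ^ 2 *
          (t ^ 4 • A + (c * τ ^ 2) • (1 : Matrix (Fin d) (Fin d) ℝ))).trace) ∧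
    ((τ ^ 2 • A + c • (1 : Matrix (Fin d) (Fin d) ℝ))⁻¹ ^ 2 *
          (τ ^ 4 • A + (c * τ ^ 2) • (1 : Matrix (Fin d) (Fin d) ℝ))).trace =
        ∑ j, τ ^ 2 / (τ ^ 2 * hA.isHermitian.eigenvalues j + c) ∧
    ((τ ^ 2 • A + c • (1 : Matrix (Fin d) (Fin d) ℝ))⁻¹ ^ 2 *
          (τ ^ 4 • A + (c * τ ^ 2) • (1 : Matrix (Fin d) (Fin d) ℝ))).trace =
        ((A + (c / τ ^ 2) • (1 : Matrix (Fin d) (Fin d) ℝ))⁻¹).trace := by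
  have H := hA.isHermitian
  set U : Matrix (Fin d) (Fin d) ℝ := (H.eigenvectorUnitary : Matrix (Fin d) (Fin d) ℝ) with hUdef
  have hU : U * star U = 1 := mem_unitaryGroup_iff.mp H.eigenvectorUnitary.2
  have hU' : star U * U = 1 := mem_unitaryGroup_iff'.mp H.eigenvectorUnitary.2
  set s : Fin d → ℝ := H.eigenvalues with hsdef
  have hs : ∀ j, 0 ≤ s j := fun j => hA.eigenvalues_nonneg j
  have hspec : A = U * diagonal s * star U := by
    have := H.spectral_theorem
    simpa using this
  -- conjugation form of affine combinations
  have haff : ∀ a b : ℝ, a • A + b • (1 : Matrix (Fin d) (Fin d) ℝ) =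
      U * diagonal (fun j => a * s j + b) * star U := by
    intro a b
    have hd : diagonal (fun j => a * s j + b)
        = a • diagonal s + b • (1 : Matrix (Fin d) (Fin d) ℝ) := by
      ext i j
      rcases eq_or_ne i j with h | h
      · subst h; simp [diagonal_apply_eq]
      · simp [diagonal_apply_ne _ h, Matrix.one_apply_ne h]
    rw [hspec, hd, Matrix.mul_add, Matrix.add_mul, Matrix.mul_smul, Matrix.smul_mul,
      Matrix.mul_smul, Matrix.smul_mul, mul_one, hU]
  -- main trace formula
  have main : ∀ t : ℝ, 0 ≤ t →
      ((t ^ 2 • A + c • (1 : Matrix (Fin d) (Fin d) ℝ))⁻¹ ^ 2 *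
          (t ^ 4 • A + (c * τ ^ 2) • (1 : Matrix (Fin d) (Fin d) ℝ))).trace =
        ∑ j, (t ^ 4 * s j + c * τ ^ 2) / (t ^ 2 * s j + c) ^ 2 := by
    intro t ht
    have hvpos : ∀ j, 0 < t ^ 2 * s j + c := fun j =>
      add_pos_of_nonneg_of_pos (mul_nonneg (sq_nonneg t) (hs j)) hc
    rw [haff (t ^ 2) c, haff (t ^ 4) (c * τ ^ 2)]
    rw [conj_inv_aux U _ (fun j => (hvpos j).ne') hU hU']
    rw [sq, conj_mul_aux _ _ _ hU', conj_mul_aux _ _ _ hU', conj_trace_aux _ _ hU']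
    rw [diagonal_mul_diagonal, diagonal_mul_diagonal, trace_diagonal]
    congr 1; funext j
    rw [div_eq_mul_inv, ← inv_pow, sq]
    ring
  refine ⟨main, ?_, ?_, ?_⟩
  · intro t ht
    rw [main τ hτ.le, main t ht]
    apply Finset.sum_le_sum
    intro j _
    have h1 : 0 < τ ^ 2 * s j + c :=
      add_pos_of_nonneg_of_pos (mul_nonneg (sq_nonneg τ) (hs j)) hc
    have h2 : 0 < t ^ 2 * s j + c :=
      add_pos_of_nonneg_of_pos (mul_nonneg (sq_nonneg t) (hs j)) hc
    have heq : (τ ^ 4 * s j + c * τ ^ 2) / (τ ^ 2 * s j + c) ^ 2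
        = τ ^ 2 / (τ ^ 2 * s j + c) := by
      rw [div_eq_div_iff (by positivity) h1.ne']; ring
    rw [heq, div_le_div_iff₀ h1 (by positivity)]
    nlinarith [mul_nonneg (mul_nonneg hc.le (hs j)) (sq_nonneg (τ ^ 2 - t ^ 2)),
      sq_nonneg (τ ^ 2 - t ^ 2)]
  · rw [main τ hτ.le]
    congr 1; funext j
    have h1 : 0 < τ ^ 2 * s j + c :=
      add_pos_of_nonneg_of_pos (mul_nonneg (sq_nonneg τ) (hs j)) hc
    rw [div_eq_div_iff (by positivity) h1.ne']; ring
  · rw [main τ hτ.le]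
    have hw : ∀ j, 0 < s j + c / τ ^ 2 := fun j =>
      add_pos_of_nonneg_of_pos (hs j) (by positivity)
    have hA1 : A + (c / τ ^ 2) • (1 : Matrix (Fin d) (Fin d) ℝ)
        = U * diagonal (fun j => 1 * s j + c / τ ^ 2) * star U := by
      rw [← haff 1 (c / τ ^ 2), one_smul]
    rw [hA1, conj_inv_aux U _ (fun j => by simpa using (hw j).ne') hU hU',
      conj_trace_aux _ _ hU', trace_diagonal]
    congr 1; funext j
    have h1 : 0 < τ ^ 2 * s j + c :=
      add_pos_of_nonneg_of_pos (mul_nonneg (sq_nonneg τ) (hs j)) hc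
    have h2 := (hw j).ne'
    have h3 := h1.ne'
    have h4 := hτ.ne'
    rw [one_mul, inv_eq_one_div, div_eq_div_iff (pow_ne_zero 2 h3) h2]
    field_simp
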